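/- (Global Ditzian–Totik-type upper bound via smooth functions) Let g : [0,1] → ℝ be absolutely continuous with ‖φ g'‖_∞ < ∞, where φ(x) = √(x(1−x)). Then for every n ≥ 2, 0 ≤ α ≤ 1, ρ > 0 and x ∈ (0,1), |G_{n,ρ}^{(α)}(g; x) − g(x)| ≤ 2√2 ‖φ g'‖_∞ φ(x)^{-1} √(G_{n,ρ}^{(α)}((t−x)²; x)). -/

import Mathlib

open MeasureTheory Filter Finset Real

/-- Generalized Bernstein basis function `p_{n,k}^{(α)}(x)` (polynomial form). -/
noncomputable def bernP (n k : ℕ) (α x : ℝ) : ℝ :=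
  ((n - 2).choose k : ℝ) * (1 - α) * x ^ k * (1 - x) ^ (n - k - 1)
    + (if 2 ≤ k then (((n - 2).choose (k - 2)) : ℝ) else 0) * (1 - α) * x ^ (k - 1) * (1 - x) ^ (n - k)
    + (n.choose k : ℝ) * α * x ^ k * (1 - x) ^ (n - k)

/-- Euler Beta function. -/
noncomputable def betaR (e f : ℝ) : ℝ := Real.Gamma e * Real.Gamma f / Real.Gamma (e + f)

/-- The Beta density `μ_{n,ρ,k}`. -/
noncomputable def muD (n k : ℕ) (ρ t : ℝ) : ℝ :=
  t ^ ((k : ℝ) * ρ) * (1 - t) ^ (((n : ℝ) - (k : ℝ)) * ρ) /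
    betaR ((k : ℝ) * ρ + 1) (((n : ℝ) - (k : ℝ)) * ρ + 1)

/-- The generalized Bernstein–Durrmeyer operator. -/
noncomputable def G (n : ℕ) (α ρ : ℝ) (f : ℝ → ℝ) (x : ℝ) : ℝ :=
  ∑ k ∈ Finset.range (n + 1), bernP n k α x * ∫ t in (0:ℝ)..1, muD n k ρ t * f t

/-! ### Auxiliary lemmas -/

lemma betaR_pos {e f : ℝ} (he : 0 < e) (hf : 0 < f) : 0 < betaR e f :=
  div_pos (mul_pos (Real.Gamma_pos_of_pos he) (Real.Gamma_pos_of_pos hf))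
    (Real.Gamma_pos_of_pos (by linarith))

lemma real_beta_integral {a b : ℝ} (ha : 0 ≤ a) (hb : 0 ≤ b) :
    ∫ t in (0:ℝ)..1, t ^ a * (1 - t) ^ b = betaR (a + 1) (b + 1) := by
  have key := Complex.Gamma_mul_Gamma_eq_betaIntegral
      (s := (a : ℂ) + 1) (t := (b : ℂ) + 1)
      (by simp; linarith) (by simp; linarith)
  have hI : Complex.betaIntegral ((a : ℂ) + 1) ((b : ℂ) + 1)
      = ((∫ t in (0:ℝ)..1, t ^ a * (1 - t) ^ b : ℝ) : ℂ) := by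
    rw [Complex.betaIntegral, ← intervalIntegral.integral_ofReal]
    refine intervalIntegral.integral_congr fun t ht => ?_
    rw [Set.uIcc_of_le (by norm_num : (0:ℝ) ≤ 1)] at ht
    rw [add_sub_cancel_right, add_sub_cancel_right, Complex.ofReal_mul,
      Complex.ofReal_cpow ht.1, Complex.ofReal_cpow (by linarith [ht.2] : (0:ℝ) ≤ 1 - t),
      Complex.ofReal_sub, Complex.ofReal_one]
  rw [hI] at key
  have h1 : ((a : ℂ) + 1) = ((a + 1 : ℝ) : ℂ) := by push_cast; ring
  have h2 : ((b : ℂ) + 1) = ((b + 1 : ℝ) : ℂ) := by push_cast; ring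
  rw [h1, h2, ← Complex.ofReal_add, Complex.Gamma_ofReal, Complex.Gamma_ofReal,
    Complex.Gamma_ofReal, ← Complex.ofReal_mul, ← Complex.ofReal_mul] at key
  have key' : Real.Gamma (a + 1) * Real.Gamma (b + 1)
      = Real.Gamma ((a + 1) + (b + 1)) * ∫ t in (0:ℝ)..1, t ^ a * (1 - t) ^ b := by
    exact_mod_cast key
  have hΓ : 0 < Real.Gamma ((a + 1) + (b + 1)) := Real.Gamma_pos_of_pos (by linarith)
  rw [betaR]
  field_simp
  linarith [key']

lemma binom_sum (m : ℕ) (x : ℝ) :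
    ∑ k ∈ Finset.range (m + 1), (m.choose k : ℝ) * x ^ k * (1 - x) ^ (m - k) = 1 := by
  have h := add_pow x (1 - x) m
  rw [add_sub_cancel, one_pow] at h
  calc ∑ k ∈ Finset.range (m + 1), (m.choose k : ℝ) * x ^ k * (1 - x) ^ (m - k)
      = ∑ k ∈ Finset.range (m + 1), x ^ k * (1 - x) ^ (m - k) * (m.choose k : ℝ) :=
        Finset.sum_congr rfl fun k _ => by ring
    _ = 1 := h.symm

lemma sum_bernP {n : ℕ} (hn : 2 ≤ n) (α x : ℝ) :
    ∑ k ∈ Finset.range (n + 1), bernP n k α x = 1 := by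
  unfold bernP
  rw [Finset.sum_add_distrib, Finset.sum_add_distrib]
  have hS3 : ∑ k ∈ Finset.range (n + 1), (n.choose k : ℝ) * α * x ^ k * (1 - x) ^ (n - k)
      = α := by
    have := binom_sum n x
    calc ∑ k ∈ Finset.range (n + 1), (n.choose k : ℝ) * α * x ^ k * (1 - x) ^ (n - k)
        = α * ∑ k ∈ Finset.range (n + 1), (n.choose k : ℝ) * x ^ k * (1 - x) ^ (n - k) := by
          rw [Finset.mul_sum]; exact Finset.sum_congr rfl fun k _ => by ring
      _ = α := by rw [this, mul_one]
  have hS1 : ∑ k ∈ Finset.range (n + 1),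
      ((n - 2).choose k : ℝ) * (1 - α) * x ^ k * (1 - x) ^ (n - k - 1)
      = (1 - α) * (1 - x) := by
    have hsub : Finset.range (n - 1) ⊆ Finset.range (n + 1) :=
      Finset.range_subset_range.2 (by omega)
    rw [← Finset.sum_subset hsub (fun k hk hk' => by
      have : n - 2 < k := by
        simp only [Finset.mem_range] at hk hk'; omega
      rw [Nat.choose_eq_zero_of_lt this]; push_cast; ring)]
    have hre : n - 1 = (n - 2) + 1 := by omega
    rw [hre]
    have := binom_sum (n - 2) x
    calc ∑ k ∈ Finset.range ((n - 2) + 1),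
          ((n - 2).choose k : ℝ) * (1 - α) * x ^ k * (1 - x) ^ (n - k - 1)
        = (1 - α) * (1 - x) * ∑ k ∈ Finset.range ((n - 2) + 1),
            ((n - 2).choose k : ℝ) * x ^ k * (1 - x) ^ ((n - 2) - k) := by
          rw [Finset.mul_sum]
          refine Finset.sum_congr rfl fun k hk => ?_
          have hk' : k ≤ n - 2 := by simpa [Nat.lt_succ_iff] using hk
          have : n - k - 1 = ((n - 2) - k) + 1 := by omega
          rw [this, pow_succ]; ring
      _ = (1 - α) * (1 - x) := by rw [this, mul_one]
  have hS2 : ∑ k ∈ Finset.range (n + 1),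
      (if 2 ≤ k then (((n - 2).choose (k - 2)) : ℝ) else 0) * (1 - α) * x ^ (k - 1) * (1 - x) ^ (n - k)
      = (1 - α) * x := by
    rw [Finset.range_eq_Ico, ← Finset.sum_Ico_consecutive _ (by omega : 0 ≤ 2) (by omega : 2 ≤ n + 1)]
    have hfirst : ∑ k ∈ Finset.Ico 0 2,
        (if 2 ≤ k then (((n - 2).choose (k - 2)) : ℝ) else 0) * (1 - α) * x ^ (k - 1) * (1 - x) ^ (n - k) = 0 := by
      rw [Finset.sum_Ico_eq_sum_range]
      norm_num [Finset.sum_range_succ]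
    rw [hfirst, zero_add, Finset.sum_Ico_eq_sum_range]
    have hre : n + 1 - 2 = (n - 2) + 1 := by omega
    rw [hre]
    have := binom_sum (n - 2) x
    calc ∑ j ∈ Finset.range ((n - 2) + 1),
          (if 2 ≤ 2 + j then (((n - 2).choose (2 + j - 2)) : ℝ) else 0) * (1 - α) * x ^ (2 + j - 1) * (1 - x) ^ (n - (2 + j))
        = (1 - α) * x * ∑ j ∈ Finset.range ((n - 2) + 1),
            ((n - 2).choose j : ℝ) * x ^ j * (1 - x) ^ ((n - 2) - j) := by
          rw [Finset.mul_sum]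
          refine Finset.sum_congr rfl fun j hj => ?_
          rw [if_pos (by omega : 2 ≤ 2 + j)]
          have e1 : 2 + j - 2 = j := by omega
          have e2 : 2 + j - 1 = j + 1 := by omega
          have e3 : n - (2 + j) = (n - 2) - j := by omega
          rw [e1, e2, e3, pow_succ]; ring
      _ = (1 - α) * x := by rw [this, mul_one]
  rw [hS1, hS2, hS3]; ring

lemma bernP_nonneg {n k : ℕ} {α x : ℝ} (hα : α ∈ Set.Icc (0:ℝ) 1)
    (hx0 : 0 ≤ x) (hx1 : x ≤ 1) : 0 ≤ bernP n k α x := by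
  have h1 : (0:ℝ) ≤ 1 - α := by linarith [hα.2]
  have h0 : (0:ℝ) ≤ α := hα.1
  have hx' : (0:ℝ) ≤ 1 - x := by linarith
  unfold bernP
  refine add_nonneg (add_nonneg ?_ ?_) ?_
  · exact mul_nonneg (mul_nonneg (mul_nonneg (Nat.cast_nonneg _) h1)
      (pow_nonneg hx0 _)) (pow_nonneg hx' _)
  · refine mul_nonneg (mul_nonneg (mul_nonneg ?_ h1) (pow_nonneg hx0 _)) (pow_nonneg hx' _)
    split_ifs
    · exact Nat.cast_nonneg _
    · exact le_refl 0
  · exact mul_nonneg (mul_nonneg (mul_nonneg (Nat.cast_nonneg _) h0)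
      (pow_nonneg hx0 _)) (pow_nonneg hx' _)

lemma cont_rpow {c : ℝ} (hc : 0 ≤ c) : Continuous (fun t : ℝ => t ^ c) :=
  continuous_iff_continuousAt.2 fun y => Real.continuousAt_rpow_const y c (Or.inr hc)

lemma muD_cont {n k : ℕ} {ρ : ℝ} (hρ : 0 ≤ ρ) (hk : k ≤ n) : Continuous (muD n k ρ) := by
  have h1 : (0:ℝ) ≤ (k : ℝ) * ρ := by positivity
  have h2 : (0:ℝ) ≤ ((n : ℝ) - (k : ℝ)) * ρ :=
    mul_nonneg (sub_nonneg.2 (by exact_mod_cast hk)) hρ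
  unfold muD
  exact ((cont_rpow h1).mul ((cont_rpow h2).comp (continuous_const.sub continuous_id))).div_const _

lemma muD_nonneg {n k : ℕ} {ρ t : ℝ} (hρ : 0 ≤ ρ) (hk : k ≤ n)
    (ht0 : 0 ≤ t) (ht1 : t ≤ 1) : 0 ≤ muD n k ρ t := by
  have h1 : (0:ℝ) ≤ (k : ℝ) * ρ := by positivity
  have h2 : (0:ℝ) ≤ ((n : ℝ) - (k : ℝ)) * ρ :=
    mul_nonneg (sub_nonneg.2 (by exact_mod_cast hk)) hρ
  unfold muD
  exact div_nonneg (mul_nonneg (Real.rpow_nonneg ht0 _) (Real.rpow_nonneg (by linarith) _))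
    (betaR_pos (by linarith) (by linarith)).le

lemma int_muD {n k : ℕ} {ρ : ℝ} (hρ : 0 ≤ ρ) (hk : k ≤ n) :
    ∫ t in (0:ℝ)..1, muD n k ρ t = 1 := by
  have h1 : (0:ℝ) ≤ (k : ℝ) * ρ := by positivity
  have h2 : (0:ℝ) ≤ ((n : ℝ) - (k : ℝ)) * ρ :=
    mul_nonneg (sub_nonneg.2 (by exact_mod_cast hk)) hρ
  unfold muD
  rw [intervalIntegral.integral_div, real_beta_integral h1 h2,
    div_self (betaR_pos (by linarith) (by linarith)).ne']

lemma intCS {m : ℝ → ℝ} (hm : Continuous m) (hnn : ∀ t ∈ Set.Icc (0:ℝ) 1, 0 ≤ m t)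
    (hone : ∫ t in (0:ℝ)..1, m t = 1) (x : ℝ) :
    (∫ t in (0:ℝ)..1, m t * |t - x|) ≤ Real.sqrt (∫ t in (0:ℝ)..1, m t * (t - x) ^ 2) := by
  set c := ∫ t in (0:ℝ)..1, m t * |t - x| with hc
  set I2 := ∫ t in (0:ℝ)..1, m t * (t - x) ^ 2 with hI2
  have cont1 : Continuous fun t => m t * |t - x| :=
    hm.mul ((continuous_id.sub continuous_const).abs)
  have cont2 : Continuous fun t => m t * (t - x) ^ 2 :=
    hm.mul ((continuous_id.sub continuous_const).pow 2)
  have i1 := cont1.intervalIntegrable (μ := MeasureTheory.volume) 0 1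
  have i2 := cont2.intervalIntegrable (μ := MeasureTheory.volume) 0 1
  have im := hm.intervalIntegrable (μ := MeasureTheory.volume) 0 1
  have hcnn : 0 ≤ c := intervalIntegral.integral_nonneg (by norm_num)
    fun t ht => mul_nonneg (hnn t ht) (abs_nonneg _)
  have hI2nn : 0 ≤ I2 := intervalIntegral.integral_nonneg (by norm_num)
    fun t ht => mul_nonneg (hnn t ht) (sq_nonneg _)
  have hexp : (∫ t in (0:ℝ)..1,
      (m t * (t - x) ^ 2 - 2 * c * (m t * |t - x|) + c ^ 2 * m t))
      = I2 - 2 * c * c + c ^ 2 * 1 := by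
    rw [intervalIntegral.integral_add (i2.sub (i1.const_mul _)) (im.const_mul _),
      intervalIntegral.integral_sub i2 (i1.const_mul _),
      intervalIntegral.integral_const_mul, intervalIntegral.integral_const_mul,
      hone, ← hc, ← hI2]
  have hpos : 0 ≤ ∫ t in (0:ℝ)..1,
      (m t * (t - x) ^ 2 - 2 * c * (m t * |t - x|) + c ^ 2 * m t) := by
    apply intervalIntegral.integral_nonneg (by norm_num)
    intro t ht
    have h1 := hnn t ht
    nlinarith [mul_nonneg h1 (sq_nonneg (|t - x| - c)), sq_abs (t - x)]
  have hsq : c ^ 2 ≤ I2 := by rw [hexp] at hpos; nlinarith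
  exact (Real.le_sqrt hcnn hI2nn).2 hsq

section gbound
variable (g g' : ℝ → ℝ) (C : ℝ) (hC : 0 ≤ C)
  (hFTC : ∀ s ∈ Set.Icc (0:ℝ) 1, ∀ t ∈ Set.Icc (0:ℝ) 1,
      g t - g s = ∫ u in s..t, g' u)
  (hbound : ∀ u ∈ Set.Ioo (0:ℝ) 1, Real.sqrt (u * (1 - u)) * |g' u| ≤ C)

include hC hFTC hbound in
lemma gdiff_le : ∀ s ∈ Set.Icc (0:ℝ) 1, ∀ t ∈ Set.Icc (0:ℝ) 1, s ≤ t →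
    |g t - g s| ≤ 2 * C * ((Real.sqrt t - Real.sqrt s)
      + (Real.sqrt (1 - s) - Real.sqrt (1 - t))) := by
  intro s hs t ht hst
  have hst1 : Real.sqrt s ≤ Real.sqrt t := Real.sqrt_le_sqrt hst
  have hst2 : Real.sqrt (1 - t) ≤ Real.sqrt (1 - s) := Real.sqrt_le_sqrt (by linarith)
  have hR : 0 ≤ 2 * C * ((Real.sqrt t - Real.sqrt s)
      + (Real.sqrt (1 - s) - Real.sqrt (1 - t))) := by
    apply mul_nonneg (by linarith) (by linarith)
  rw [hFTC s hs t ht]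
  by_cases hint : IntervalIntegrable g' MeasureTheory.volume s t
  · set h : ℝ → ℝ := fun u => C * (u ^ (-(1/2) : ℝ) + (1 - u) ^ (-(1/2) : ℝ)) with hh
    have hint1 : IntervalIntegrable (fun u : ℝ => u ^ (-(1/2) : ℝ))
        MeasureTheory.volume s t := intervalIntegral.intervalIntegrable_rpow' (by norm_num)
    have hint2 : IntervalIntegrable (fun u : ℝ => (1 - u) ^ (-(1/2) : ℝ))
        MeasureTheory.volume s t := by
      have h0 : IntervalIntegrable (fun u : ℝ => u ^ (-(1/2) : ℝ))
          MeasureTheory.volume (1 - t) (1 - s) :=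
        intervalIntegral.intervalIntegrable_rpow' (by norm_num)
      have := (h0.comp_sub_left 1).symm
      simpa using this
    have hinth : IntervalIntegrable h MeasureTheory.volume s t :=
      ((hint1.add hint2).const_mul C)
    have habs := intervalIntegral.abs_integral_le_integral_abs
      (μ := MeasureTheory.volume) (f := g') hst
    have hmono : (∫ u in s..t, |g' u|) ≤ ∫ u in s..t, h u := by
      apply intervalIntegral.integral_mono_ae_restrict hst hint.abs hinth
      have h01 : ∀ᵐ u ∂(MeasureTheory.volume.restrict (Set.Icc s t)),
          u ∉ ({0, 1} : Set ℝ) := by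
        exact MeasureTheory.ae_restrict_of_ae
          (MeasureTheory.measure_eq_zero_iff_ae_notMem.mp
            (Set.Finite.measure_zero (Set.toFinite ({0,1} : Set ℝ)) _))
      filter_upwards [h01, MeasureTheory.ae_restrict_mem measurableSet_Icc] with u hu01 hu
      have hu0 : 0 < u := lt_of_le_of_ne (le_trans hs.1 hu.1) (by simp at hu01; tauto)
      have hu1 : u < 1 := lt_of_le_of_ne (le_trans hu.2 ht.2) (by simp at hu01; tauto)
      have hbu := hbound u ⟨hu0, hu1⟩
      have hsu : 0 < Real.sqrt u := Real.sqrt_pos.2 hu0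
      have hsu1 : 0 < Real.sqrt (1 - u) := Real.sqrt_pos.2 (by linarith)
      have hprod : Real.sqrt (u * (1 - u)) = Real.sqrt u * Real.sqrt (1 - u) :=
        Real.sqrt_mul hu0.le _
      have hg'u : |g' u| ≤ C / (Real.sqrt u * Real.sqrt (1 - u)) := by
        rw [le_div_iff₀ (by positivity)]
        calc |g' u| * (Real.sqrt u * Real.sqrt (1 - u))
            = Real.sqrt (u * (1 - u)) * |g' u| := by rw [hprod]; ring
          _ ≤ C := hbu
      have hrw1 : u ^ (-(1/2) : ℝ) = (Real.sqrt u)⁻¹ := by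
        rw [Real.rpow_neg hu0.le, Real.sqrt_eq_rpow]
      have hrw2 : (1 - u) ^ (-(1/2) : ℝ) = (Real.sqrt (1 - u))⁻¹ := by
        rw [Real.rpow_neg (by linarith), Real.sqrt_eq_rpow]
      have hsum1 : 1 ≤ Real.sqrt u + Real.sqrt (1 - u) := by
        nlinarith [Real.sq_sqrt hu0.le, Real.sq_sqrt (by linarith : (0:ℝ) ≤ 1 - u),
          Real.sqrt_nonneg u, Real.sqrt_nonneg (1 - u),
          Real.sqrt_le_sqrt hu.1]
      calc |g' u| ≤ C / (Real.sqrt u * Real.sqrt (1 - u)) := hg'u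
        _ ≤ C * ((Real.sqrt u)⁻¹ + (Real.sqrt (1 - u))⁻¹) := by
            rw [div_le_iff₀ (by positivity)]
            have expand : C * ((Real.sqrt u)⁻¹ + (Real.sqrt (1 - u))⁻¹)
                * (Real.sqrt u * Real.sqrt (1 - u))
                = C * (Real.sqrt (1 - u) + Real.sqrt u) := by
              field_simp
            rw [expand]
            nlinarith
        _ = h u := by rw [hh]; simp only []; rw [hrw1, hrw2]
    have hval : (∫ u in s..t, h u) = 2 * C * ((Real.sqrt t - Real.sqrt s)
        + (Real.sqrt (1 - s) - Real.sqrt (1 - t))) := by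
      rw [hh]
      rw [intervalIntegral.integral_const_mul,
        intervalIntegral.integral_add hint1 hint2,
        integral_rpow (Or.inl (by norm_num)),
        intervalIntegral.integral_comp_sub_left (fun u : ℝ => u ^ (-(1/2) : ℝ)) 1,
        integral_rpow (Or.inl (by norm_num))]
      have e : (-(1/2) : ℝ) + 1 = 1/2 := by norm_num
      rw [e]
      rw [← Real.sqrt_eq_rpow, ← Real.sqrt_eq_rpow, ← Real.sqrt_eq_rpow, ← Real.sqrt_eq_rpow]
      ring
    calc |∫ u in s..t, g' u| ≤ ∫ u in s..t, |g' u| := habs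
      _ ≤ ∫ u in s..t, h u := hmono
      _ = _ := hval
  · rw [intervalIntegral.integral_undef hint]
    simpa using hR

include hC hFTC hbound in
lemma gdiff_abs : ∀ s ∈ Set.Icc (0:ℝ) 1, ∀ t ∈ Set.Icc (0:ℝ) 1,
    |g t - g s| ≤ 2 * C * (|Real.sqrt t - Real.sqrt s|
      + |Real.sqrt (1 - t) - Real.sqrt (1 - s)|) := by
  intro s hs t ht
  rcases le_total s t with h | h
  · refine (gdiff_le g g' C hC hFTC hbound s hs t ht h).trans ?_
    apply mul_le_mul_of_nonneg_left _ (by linarith)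
    have h1 := le_abs_self (Real.sqrt t - Real.sqrt s)
    have h2 : Real.sqrt (1 - s) - Real.sqrt (1 - t)
        ≤ |Real.sqrt (1 - t) - Real.sqrt (1 - s)| := by
      rw [abs_sub_comm]; exact le_abs_self _
    linarith
  · rw [abs_sub_comm]
    refine (gdiff_le g g' C hC hFTC hbound t ht s hs h).trans ?_
    apply mul_le_mul_of_nonneg_left _ (by linarith)
    have h1 : Real.sqrt s - Real.sqrt t ≤ |Real.sqrt t - Real.sqrt s| := by
      rw [abs_sub_comm]; exact le_abs_self _
    have h2 := le_abs_self (Real.sqrt (1 - t) - Real.sqrt (1 - s))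
    linarith

end gbound

section gbound2
variable (g : ℝ → ℝ) (C : ℝ) (hC : 0 ≤ C)
  (gda : ∀ s ∈ Set.Icc (0:ℝ) 1, ∀ t ∈ Set.Icc (0:ℝ) 1,
    |g t - g s| ≤ 2 * C * (|Real.sqrt t - Real.sqrt s|
      + |Real.sqrt (1 - t) - Real.sqrt (1 - s)|))

include gda in
omit hC in
lemma g_continuousOn : ContinuousOn g (Set.Icc (0:ℝ) 1) := by
  intro s hs
  set D : ℝ → ℝ := fun t => 2 * C * (|Real.sqrt t - Real.sqrt s|
      + |Real.sqrt (1 - t) - Real.sqrt (1 - s)|) with hD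
  have hDcont : Continuous D := by
    apply continuous_const.mul
    apply Continuous.add
    · exact (Real.continuous_sqrt.sub continuous_const).abs
    · exact ((Real.continuous_sqrt.comp (continuous_const.sub continuous_id)).sub
        continuous_const).abs
  have hD0 : D s = 0 := by simp [hD]
  have hDlim : Tendsto D (nhdsWithin s (Set.Icc 0 1)) (nhds 0) := by
    rw [← hD0]
    exact (hDcont.continuousAt).continuousWithinAt
  rw [ContinuousWithinAt, tendsto_iff_dist_tendsto_zero]
  refine squeeze_zero' (Filter.Eventually.of_forall fun t => dist_nonneg) ?_ hDlim
  filter_upwards [self_mem_nhdsWithin] with t ht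
  rw [Real.dist_eq]
  exact gda s hs t ht

include hC gda in
lemma g_lip {x : ℝ} (hx : x ∈ Set.Ioo (0:ℝ) 1) :
    ∀ t ∈ Set.Icc (0:ℝ) 1, |g t - g x|
      ≤ 2 * Real.sqrt 2 * C * (Real.sqrt (x * (1 - x)))⁻¹ * |t - x| := by
  intro t ht
  obtain ⟨hx0, hx1⟩ := hx
  have hsx : 0 < Real.sqrt x := Real.sqrt_pos.2 hx0
  have hsx1 : 0 < Real.sqrt (1 - x) := Real.sqrt_pos.2 (by linarith)
  have ht0 := ht.1
  have ht1 := ht.2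
  have e1 : |Real.sqrt t - Real.sqrt x| ≤ |t - x| / Real.sqrt x := by
    rw [le_div_iff₀ hsx]
    have key : (Real.sqrt t - Real.sqrt x) * (Real.sqrt t + Real.sqrt x) = t - x := by
      have h1 : Real.sqrt t * Real.sqrt t = t := Real.mul_self_sqrt ht0
      have h2 : Real.sqrt x * Real.sqrt x = x := Real.mul_self_sqrt hx0.le
      nlinarith
    calc |Real.sqrt t - Real.sqrt x| * Real.sqrt x
        ≤ |Real.sqrt t - Real.sqrt x| * (Real.sqrt t + Real.sqrt x) := by
          apply mul_le_mul_of_nonneg_left _ (abs_nonneg _)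
          linarith [Real.sqrt_nonneg t]
      _ = |(Real.sqrt t - Real.sqrt x) * (Real.sqrt t + Real.sqrt x)| := by
          rw [abs_mul, abs_of_nonneg (by positivity : (0:ℝ) ≤ Real.sqrt t + Real.sqrt x)]
      _ = |t - x| := by rw [key]
  have e2 : |Real.sqrt (1 - t) - Real.sqrt (1 - x)| ≤ |t - x| / Real.sqrt (1 - x) := by
    rw [le_div_iff₀ hsx1]
    have key : (Real.sqrt (1 - t) - Real.sqrt (1 - x))
        * (Real.sqrt (1 - t) + Real.sqrt (1 - x)) = x - t := by
      have h1 : Real.sqrt (1 - t) * Real.sqrt (1 - t) = 1 - t :=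
        Real.mul_self_sqrt (by linarith)
      have h2 : Real.sqrt (1 - x) * Real.sqrt (1 - x) = 1 - x :=
        Real.mul_self_sqrt (by linarith)
      nlinarith
    calc |Real.sqrt (1 - t) - Real.sqrt (1 - x)| * Real.sqrt (1 - x)
        ≤ |Real.sqrt (1 - t) - Real.sqrt (1 - x)|
            * (Real.sqrt (1 - t) + Real.sqrt (1 - x)) := by
          apply mul_le_mul_of_nonneg_left _ (abs_nonneg _)
          linarith [Real.sqrt_nonneg (1 - t)]
      _ = |(Real.sqrt (1 - t) - Real.sqrt (1 - x))
            * (Real.sqrt (1 - t) + Real.sqrt (1 - x))| := by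
          rw [abs_mul, abs_of_nonneg
            (by positivity : (0:ℝ) ≤ Real.sqrt (1 - t) + Real.sqrt (1 - x))]
      _ = |x - t| := by rw [key]
      _ = |t - x| := abs_sub_comm _ _
  have hprod : Real.sqrt (x * (1 - x)) = Real.sqrt x * Real.sqrt (1 - x) :=
    Real.sqrt_mul hx0.le _
  have hkey : (Real.sqrt x)⁻¹ + (Real.sqrt (1 - x))⁻¹
      ≤ Real.sqrt 2 * (Real.sqrt (x * (1 - x)))⁻¹ := by
    rw [hprod, ← div_eq_mul_inv]
    rw [inv_add_inv hsx.ne' hsx1.ne']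
    rw [div_le_div_iff₀ (by positivity) (by positivity)]
    have hs2 : Real.sqrt x + Real.sqrt (1 - x) ≤ Real.sqrt 2 := by
      apply (Real.le_sqrt (by positivity) (by norm_num)).2
      have h1 : Real.sqrt x * Real.sqrt x = x := Real.mul_self_sqrt hx0.le
      have h2 : Real.sqrt (1 - x) * Real.sqrt (1 - x) = 1 - x :=
        Real.mul_self_sqrt (by linarith)
      have h3 : Real.sqrt x * Real.sqrt (1 - x) ≤ 1/2 := by
        nlinarith [sq_nonneg (Real.sqrt x - Real.sqrt (1 - x))]
      nlinarith
    exact mul_le_mul_of_nonneg_right hs2 (by positivity)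
  calc |g t - g x| ≤ 2 * C * (|Real.sqrt t - Real.sqrt x|
        + |Real.sqrt (1 - t) - Real.sqrt (1 - x)|) :=
      gda x ⟨hx0.le, hx1.le⟩ t ht
    _ ≤ 2 * C * (|t - x| / Real.sqrt x + |t - x| / Real.sqrt (1 - x)) := by
        apply mul_le_mul_of_nonneg_left (add_le_add e1 e2) (by linarith)
    _ = 2 * C * |t - x| * ((Real.sqrt x)⁻¹ + (Real.sqrt (1 - x))⁻¹) := by ring
    _ ≤ 2 * C * |t - x| * (Real.sqrt 2 * (Real.sqrt (x * (1 - x)))⁻¹) := by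
        apply mul_le_mul_of_nonneg_left hkey (by positivity)
    _ = 2 * Real.sqrt 2 * C * (Real.sqrt (x * (1 - x)))⁻¹ * |t - x| := by ring

end gbound2

theorem G_ditzian_totik_bound (g g' : ℝ → ℝ) (C : ℝ) (hC : 0 ≤ C)
    (hFTC : ∀ s ∈ Set.Icc (0:ℝ) 1, ∀ t ∈ Set.Icc (0:ℝ) 1,
      g t - g s = ∫ u in s..t, g' u)
    (hbound : ∀ u ∈ Set.Ioo (0:ℝ) 1, Real.sqrt (u * (1 - u)) * |g' u| ≤ C)
    (n : ℕ) (hn : 2 ≤ n) (α ρ : ℝ)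
    (hα : α ∈ Set.Icc (0:ℝ) 1) (hρ : 0 < ρ) (x : ℝ) (hx : x ∈ Set.Ioo (0:ℝ) 1) :
    |G n α ρ g x - g x| ≤
      2 * Real.sqrt 2 * C * (Real.sqrt (x * (1 - x)))⁻¹ *
        Real.sqrt (G n α ρ (fun t => (t - x) ^ 2) x) := by
  obtain ⟨hx0, hx1⟩ := hx
  have hgda := gdiff_abs g g' C hC hFTC hbound
  have hgcont : ContinuousOn g (Set.Icc (0:ℝ) 1) := g_continuousOn g C hgda
  have hlip := g_lip g C hC hgda ⟨hx0, hx1⟩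
  set K := 2 * Real.sqrt 2 * C * (Real.sqrt (x * (1 - x)))⁻¹ with hK
  have hKnn : 0 ≤ K := by positivity
  have hPnn : ∀ k, 0 ≤ bernP n k α x := fun k => bernP_nonneg hα hx0.le hx1.le
  have hPsum : ∑ k ∈ Finset.range (n + 1), bernP n k α x = 1 := sum_bernP hn α x
  set I2 : ℕ → ℝ := fun k => ∫ t in (0:ℝ)..1, muD n k ρ t * (t - x) ^ 2 with hI2def
  have hkle : ∀ k ∈ Finset.range (n + 1), k ≤ n :=
    fun k hk => Nat.lt_succ_iff.mp (Finset.mem_range.mp hk)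
  have hI2nn : ∀ k ∈ Finset.range (n + 1), 0 ≤ I2 k := by
    intro k hk
    apply intervalIntegral.integral_nonneg (by norm_num)
    intro t ht
    exact mul_nonneg (muD_nonneg hρ.le (hkle k hk) ht.1 ht.2) (sq_nonneg _)
  -- decomposition
  have stepA : ∀ k ∈ Finset.range (n + 1),
      (∫ t in (0:ℝ)..1, muD n k ρ t * (g t - g x))
        = (∫ t in (0:ℝ)..1, muD n k ρ t * g t) - g x := by
    intro k hk
    have hm : Continuous (muD n k ρ) := muD_cont hρ.le (hkle k hk)
    have intg : IntervalIntegrable (fun t => muD n k ρ t * g t)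
        MeasureTheory.volume 0 1 := by
      apply ContinuousOn.intervalIntegrable
      rw [Set.uIcc_of_le (by norm_num : (0:ℝ) ≤ 1)]
      exact hm.continuousOn.mul hgcont
    have e : (fun t => muD n k ρ t * (g t - g x))
        = fun t => muD n k ρ t * g t - muD n k ρ t * g x := by
      funext t; ring
    rw [e, intervalIntegral.integral_sub intg ((hm.intervalIntegrable 0 1).mul_const _),
      intervalIntegral.integral_mul_const, int_muD hρ.le (hkle k hk), one_mul]
  have hdecomp : G n α ρ g x - g x
      = ∑ k ∈ Finset.range (n + 1),
          bernP n k α x * ∫ t in (0:ℝ)..1, muD n k ρ t * (g t - g x) := by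
    have e1 : ∑ k ∈ Finset.range (n + 1),
        bernP n k α x * ∫ t in (0:ℝ)..1, muD n k ρ t * (g t - g x)
        = ∑ k ∈ Finset.range (n + 1),
            (bernP n k α x * (∫ t in (0:ℝ)..1, muD n k ρ t * g t)
              - bernP n k α x * g x) :=
      Finset.sum_congr rfl fun k hk => by rw [stepA k hk]; ring
    rw [e1, Finset.sum_sub_distrib, ← Finset.sum_mul, hPsum, one_mul, G]
  -- per-k bound
  have perk : ∀ k ∈ Finset.range (n + 1),
      |∫ t in (0:ℝ)..1, muD n k ρ t * (g t - g x)| ≤ K * Real.sqrt (I2 k) := by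
    intro k hk
    have hm : Continuous (muD n k ρ) := muD_cont hρ.le (hkle k hk)
    have hmnn : ∀ t ∈ Set.Icc (0:ℝ) 1, 0 ≤ muD n k ρ t :=
      fun t ht => muD_nonneg hρ.le (hkle k hk) ht.1 ht.2
    have hone : ∫ t in (0:ℝ)..1, muD n k ρ t = 1 := int_muD hρ.le (hkle k hk)
    have int_abs : IntervalIntegrable (fun t => muD n k ρ t * |g t - g x|)
        MeasureTheory.volume 0 1 := by
      apply ContinuousOn.intervalIntegrable
      rw [Set.uIcc_of_le (by norm_num : (0:ℝ) ≤ 1)]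
      exact hm.continuousOn.mul ((hgcont.sub continuousOn_const).abs)
    have int_K : IntervalIntegrable (fun t => muD n k ρ t * (K * |t - x|))
        MeasureTheory.volume 0 1 :=
      (hm.mul (continuous_const.mul ((continuous_id.sub continuous_const).abs))).intervalIntegrable 0 1
    calc |∫ t in (0:ℝ)..1, muD n k ρ t * (g t - g x)|
        ≤ ∫ t in (0:ℝ)..1, |muD n k ρ t * (g t - g x)| :=
          intervalIntegral.abs_integral_le_integral_abs (by norm_num)
      _ = ∫ t in (0:ℝ)..1, muD n k ρ t * |g t - g x| := by
          refine intervalIntegral.integral_congr fun t ht => ?_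
          rw [Set.uIcc_of_le (by norm_num : (0:ℝ) ≤ 1)] at ht
          rw [abs_mul, abs_of_nonneg (hmnn t ht)]
      _ ≤ ∫ t in (0:ℝ)..1, muD n k ρ t * (K * |t - x|) := by
          apply intervalIntegral.integral_mono_on (by norm_num) int_abs int_K
          intro t ht
          exact mul_le_mul_of_nonneg_left (hlip t ht) (hmnn t ht)
      _ = K * ∫ t in (0:ℝ)..1, muD n k ρ t * |t - x| := by
          rw [show (fun t => muD n k ρ t * (K * |t - x|))
              = fun t => K * (muD n k ρ t * |t - x|) from funext fun t => by ring,
            intervalIntegral.integral_const_mul]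
      _ ≤ K * Real.sqrt (I2 k) :=
          mul_le_mul_of_nonneg_left (intCS hm hmnn hone x) hKnn
  -- discrete Cauchy-Schwarz
  have hsum2nn : 0 ≤ ∑ k ∈ Finset.range (n + 1), bernP n k α x * I2 k :=
    Finset.sum_nonneg fun k hk => mul_nonneg (hPnn k) (hI2nn k hk)
  have hCSd : (∑ k ∈ Finset.range (n + 1), bernP n k α x * Real.sqrt (I2 k))
      ≤ Real.sqrt (∑ k ∈ Finset.range (n + 1), bernP n k α x * I2 k) := by
    have hCS := Finset.sum_mul_sq_le_sq_mul_sq (Finset.range (n + 1))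
      (fun k => Real.sqrt (bernP n k α x))
      (fun k => Real.sqrt (bernP n k α x) * Real.sqrt (I2 k))
    have e1 : ∑ k ∈ Finset.range (n + 1),
        Real.sqrt (bernP n k α x) * (Real.sqrt (bernP n k α x) * Real.sqrt (I2 k))
        = ∑ k ∈ Finset.range (n + 1), bernP n k α x * Real.sqrt (I2 k) :=
      Finset.sum_congr rfl fun k _ => by
        rw [← mul_assoc, Real.mul_self_sqrt (hPnn k)]
    have e2 : ∑ k ∈ Finset.range (n + 1), (Real.sqrt (bernP n k α x)) ^ 2
        = ∑ k ∈ Finset.range (n + 1), bernP n k α x :=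
      Finset.sum_congr rfl fun k _ => Real.sq_sqrt (hPnn k)
    have e3 : ∑ k ∈ Finset.range (n + 1),
        (Real.sqrt (bernP n k α x) * Real.sqrt (I2 k)) ^ 2
        = ∑ k ∈ Finset.range (n + 1), bernP n k α x * I2 k :=
      Finset.sum_congr rfl fun k hk => by
        rw [mul_pow, Real.sq_sqrt (hPnn k), Real.sq_sqrt (hI2nn k hk)]
    rw [e1, e2, e3, hPsum, one_mul] at hCS
    exact (Real.le_sqrt (Finset.sum_nonneg fun k _ =>
      mul_nonneg (hPnn k) (Real.sqrt_nonneg _)) hsum2nn).2 hCS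
  have hG2 : G n α ρ (fun t => (t - x) ^ 2) x
      = ∑ k ∈ Finset.range (n + 1), bernP n k α x * I2 k := by
    rw [G]
  calc |G n α ρ g x - g x|
      = |∑ k ∈ Finset.range (n + 1),
          bernP n k α x * ∫ t in (0:ℝ)..1, muD n k ρ t * (g t - g x)| := by
        rw [hdecomp]
    _ ≤ ∑ k ∈ Finset.range (n + 1),
          |bernP n k α x * ∫ t in (0:ℝ)..1, muD n k ρ t * (g t - g x)| :=
        Finset.abs_sum_le_sum_abs _ _
    _ ≤ ∑ k ∈ Finset.range (n + 1), bernP n k α x * (K * Real.sqrt (I2 k)) := by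
        refine Finset.sum_le_sum fun k hk => ?_
        rw [abs_mul, abs_of_nonneg (hPnn k)]
        exact mul_le_mul_of_nonneg_left (perk k hk) (hPnn k)
    _ = K * ∑ k ∈ Finset.range (n + 1), bernP n k α x * Real.sqrt (I2 k) := by
        rw [Finset.mul_sum]; exact Finset.sum_congr rfl fun k _ => by ring
    _ ≤ K * Real.sqrt (∑ k ∈ Finset.range (n + 1), bernP n k α x * I2 k) :=
        mul_le_mul_of_nonneg_left hCSd hKnn
    _ = K * Real.sqrt (G n α ρ (fun t => (t - x) ^ 2) x) := by rw [hG2]
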